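/- Let (Y_t) satisfy E[Y_t Y_s] = σ² e^{−λ|t−s|} with σ², λ > 0 and define X_t = Y_t + λ ∫_0^t Y_s ds (the borderline case C = λ). Then E[X_t²] = σ²(1 + 2λt), which tends to infinity linearly in t. -/

import Mathlib

open MeasureTheory Real intervalIntegral

private lemma expInt {lam : ℝ} (hlam : lam ≠ 0) (a b : ℝ) :
    ∫ u in a..b, Real.exp (lam * u) = (Real.exp (lam * b) - Real.exp (lam * a)) / lam := by
  have h : ∀ x ∈ Set.uIcc a b,
      HasDerivAt (fun u => Real.exp (lam * u) / lam) (Real.exp (lam * x)) x := by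
    intro x _
    have h1 : HasDerivAt (fun u : ℝ => lam * u) lam x := by
      simpa using (hasDerivAt_id x).const_mul lam
    have h3 := ((Real.hasDerivAt_exp (lam * x)).comp x h1).div_const lam
    simpa [Function.comp, mul_div_assoc, div_self hlam] using h3
  rw [intervalIntegral.integral_eq_sub_of_hasDerivAt h
    ((Real.continuous_exp.comp (continuous_const.mul continuous_id)).intervalIntegrable a b)]
  ring

private lemma kernInt {lam s t : ℝ} (hlam : 0 < lam) (hs : 0 ≤ s) (hst : s ≤ t) :
    ∫ u in (0:ℝ)..t, Real.exp (-lam * |s - u|)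
      = (2 - Real.exp (-lam * s) - Real.exp (-lam * (t - s))) / lam := by
  have hl := hlam.ne'
  have hcont : Continuous fun u : ℝ => Real.exp (-lam * |s - u|) := by fun_prop
  have key1 : Real.exp (-lam * s) * Real.exp (lam * s) = 1 := by
    rw [← Real.exp_add]; ring_nf; exact Real.exp_zero
  have h1 : ∫ u in (0:ℝ)..s, Real.exp (-lam * |s - u|)
      = (1 - Real.exp (-lam * s)) / lam := by
    have hcg : ∀ u ∈ Set.uIcc (0:ℝ) s, Real.exp (-lam * |s - u|)
        = Real.exp (-lam * s) * Real.exp (lam * u) := by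
      intro u hu
      rw [Set.uIcc_of_le hs] at hu
      rw [abs_of_nonneg (by linarith [hu.2] : (0:ℝ) ≤ s - u), ← Real.exp_add]
      ring_nf
    rw [intervalIntegral.integral_congr hcg, intervalIntegral.integral_const_mul,
      expInt hl]
    rw [mul_zero, Real.exp_zero]
    simp only [neg_mul] at key1 ⊢
    field_simp
    linear_combination key1
  have h2 : ∫ u in s..t, Real.exp (-lam * |s - u|)
      = (1 - Real.exp (-lam * (t - s))) / lam := by
    have hcg : ∀ u ∈ Set.uIcc s t, Real.exp (-lam * |s - u|)
        = Real.exp (lam * s) * Real.exp (-lam * u) := by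
      intro u hu
      rw [Set.uIcc_of_le hst] at hu
      rw [abs_of_nonpos (by linarith [hu.1] : s - u ≤ 0), ← Real.exp_add]
      ring_nf
    have key2 : Real.exp (lam * s) * Real.exp (-lam * t) = Real.exp (-lam * (t - s)) := by
      rw [← Real.exp_add]; ring_nf
    rw [intervalIntegral.integral_congr hcg, intervalIntegral.integral_const_mul,
      expInt (neg_ne_zero.mpr hl)]
    simp only [neg_mul] at key1 key2 ⊢
    linear_combination key1 / lam - key2 / lam
  rw [← intervalIntegral.integral_add_adjacent_intervals
      (hcont.intervalIntegrable 0 s) (hcont.intervalIntegrable s t), h1, h2]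
  ring

private lemma kernInt2 {lam t : ℝ} (hlam : 0 < lam) (ht : 0 ≤ t) :
    ∫ s in (0:ℝ)..t, (2 - Real.exp (-lam * s) - Real.exp (-lam * (t - s))) / lam
      = 2 * t / lam - 2 * (1 - Real.exp (-lam * t)) / lam ^ 2 := by
  have hl := hlam.ne'
  have i1 : IntervalIntegrable (fun s : ℝ => Real.exp (-lam * s)) volume 0 t := by
    apply Continuous.intervalIntegrable; fun_prop
  have i2 : IntervalIntegrable (fun s : ℝ => Real.exp (-lam * (t - s))) volume 0 t := by
    apply Continuous.intervalIntegrable; fun_prop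
  have i0 : IntervalIntegrable (fun _ : ℝ => (2:ℝ)) volume 0 t := intervalIntegrable_const
  have e1 : ∫ s in (0:ℝ)..t, Real.exp (-lam * s)
      = (Real.exp (-lam * t) - 1) / (-lam) := by
    simpa using expInt (neg_ne_zero.mpr hl) 0 t
  have e2 : ∫ s in (0:ℝ)..t, Real.exp (-lam * (t - s))
      = Real.exp (-lam * t) * ((Real.exp (lam * t) - 1) / lam) := by
    have hcg : ∀ s ∈ Set.uIcc (0:ℝ) t, Real.exp (-lam * (t - s))
        = Real.exp (-lam * t) * Real.exp (lam * s) := by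
      intro s _
      rw [← Real.exp_add]; ring_nf
    rw [intervalIntegral.integral_congr hcg, intervalIntegral.integral_const_mul,
      expInt hl, mul_zero, Real.exp_zero]
  have key1 : Real.exp (-lam * t) * Real.exp (lam * t) = 1 := by
    rw [← Real.exp_add]; ring_nf; exact Real.exp_zero
  simp only [div_eq_mul_inv]
  rw [intervalIntegral.integral_mul_const, intervalIntegral.integral_sub (i0.sub i1) i2,
    intervalIntegral.integral_sub i0 i1, e1, e2, intervalIntegral.integral_const]
  simp only [neg_mul, smul_eq_mul, sub_zero] at key1 ⊢
  linear_combination (-1 / lam ^ 2) * key1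


section Aux
variable {Ω : Type*} [MeasurableSpace Ω] (P : Measure Ω) [IsProbabilityMeasure P]

private lemma mainEq (σ2 lam : ℝ) (hσ : 0 < σ2) (hlam : 0 < lam)
    (Y : ℝ → Ω → ℝ) (hmeas : Measurable (Function.uncurry Y))
    (hpath : ∀ ω, Continuous fun t => Y t ω)
    (hsq : ∀ t : ℝ, 0 ≤ t → Integrable (fun ω => (Y t ω) ^ 2) P)
    (hcov : ∀ s t : ℝ, 0 ≤ s → 0 ≤ t →
      ∫ ω, Y t ω * Y s ω ∂P = σ2 * Real.exp (-lam * |t - s|))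
    {t : ℝ} (ht : 0 ≤ t) :
    ∫ ω, (Y t ω + lam * ∫ s in (0:ℝ)..t, Y s ω) ^ 2 ∂P = σ2 * (1 + 2 * lam * t) := by
  classical
  set μ : Measure ℝ := volume.restrict (Set.Ioc (0:ℝ) t) with hμdef
  haveI : IsFiniteMeasure μ := by
    constructor
    rw [hμdef, Measure.restrict_apply_univ, Real.volume_Ioc]
    exact ENNReal.ofReal_lt_top
  have mY : ∀ s, Measurable fun ω => Y s ω := fun s => hmeas.comp measurable_prodMk_left
  have mYsw : Measurable fun p : Ω × ℝ => Y p.2 p.1 := hmeas.comp measurable_swap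
  -- second moment
  have L2 : ∀ s : ℝ, 0 ≤ s → ∫ ω, Y s ω ^ 2 ∂P = σ2 := by
    intro s hs
    have h := hcov s s hs hs
    simp only [sub_self, abs_zero, mul_zero, Real.exp_zero, mul_one] at h
    simpa [sq] using h
  -- pointwise product integrable
  have L1 : ∀ s u : ℝ, 0 ≤ s → 0 ≤ u → Integrable (fun ω => Y s ω * Y u ω) P := by
    intro s u hs hu
    refine Integrable.mono' (((hsq s hs).add (hsq u hu)).div_const 2)
      (((mY s).mul (mY u)).aestronglyMeasurable) (.of_forall fun ω => ?_)
    simp only [Pi.add_apply, Real.norm_eq_abs, abs_mul]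
    nlinarith [sq_nonneg (|Y s ω| - |Y u ω|), sq_abs (Y s ω), sq_abs (Y u ω),
      abs_nonneg (Y s ω), abs_nonneg (Y u ω)]
  -- uniform bound on E|Y_s Y_u|
  have L1b : ∀ s u : ℝ, 0 ≤ s → 0 ≤ u → ∫ ω, ‖Y s ω * Y u ω‖ ∂P ≤ σ2 := by
    intro s u hs hu
    have hint : Integrable (fun ω => ((Y s ω) ^ 2 + (Y u ω) ^ 2) / 2) P :=
      ((hsq s hs).add (hsq u hu)).div_const 2
    have h1 : ∫ ω, ‖Y s ω * Y u ω‖ ∂P ≤ ∫ ω, ((Y s ω) ^ 2 + (Y u ω) ^ 2) / 2 ∂P := by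
      refine integral_mono (L1 s u hs hu).norm hint fun ω => ?_
      rw [Real.norm_eq_abs, abs_mul]
      nlinarith [sq_nonneg (|Y s ω| - |Y u ω|), sq_abs (Y s ω), sq_abs (Y u ω),
        abs_nonneg (Y s ω), abs_nonneg (Y u ω)]
    rw [MeasureTheory.integral_div, integral_add (hsq s hs) (hsq u hu), L2 s hs, L2 u hu] at h1
    linarith
  -- product integrability in (ω, u)
  have hprod : ∀ s : ℝ, 0 ≤ s →
      Integrable (fun p : Ω × ℝ => Y s p.1 * Y p.2 p.1) (P.prod μ) := by
    intro s hs
    have hm : AEStronglyMeasurable (fun p : Ω × ℝ => Y s p.1 * Y p.2 p.1) (P.prod μ) :=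
      (((mY s).comp measurable_fst).mul mYsw).aestronglyMeasurable
    refine (integrable_prod_iff' hm).2 ⟨?_, ?_⟩
    · filter_upwards [ae_restrict_mem measurableSet_Ioc] with u hu
      exact L1 s u hs hu.1.le
    · refine Integrable.mono' (integrable_const σ2) ?_ ?_
      · have hsm : StronglyMeasurable fun p : Ω × ℝ => ‖Y s p.1 * Y p.2 p.1‖ :=
          (((mY s).comp measurable_fst).mul mYsw).norm.stronglyMeasurable
        exact hsm.integral_prod_left'.aestronglyMeasurable
      · filter_upwards [ae_restrict_mem measurableSet_Ioc] with u hu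
        rw [Real.norm_of_nonneg (integral_nonneg fun ω => norm_nonneg _)]
        exact L1b s u hs hu.1.le
  -- F
  set F : Ω → ℝ := fun ω => ∫ u, Y u ω ∂μ with hFdef
  have hIntYF : ∀ s : ℝ, 0 ≤ s → Integrable (fun ω => Y s ω * F ω) P := by
    intro s hs
    refine ((hprod s hs).integral_prod_left).congr (.of_forall fun ω => ?_)
    show ∫ u, Y s ω * Y u ω ∂μ = Y s ω * F ω
    exact MeasureTheory.integral_const_mul _ _
  have G1 : ∀ s : ℝ, 0 ≤ s →
      ∫ ω, Y s ω * F ω ∂P = ∫ u, σ2 * Real.exp (-lam * |s - u|) ∂μ := by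
    intro s hs
    have h1 : ∫ ω, Y s ω * F ω ∂P = ∫ ω, ∫ u, Y s ω * Y u ω ∂μ ∂P := by
      refine integral_congr_ae (.of_forall fun ω => ?_)
      show Y s ω * F ω = ∫ u, Y s ω * Y u ω ∂μ
      exact (MeasureTheory.integral_const_mul _ _).symm
    rw [h1, integral_integral_swap (hprod s hs)]
    refine integral_congr_ae ?_
    filter_upwards [ae_restrict_mem measurableSet_Ioc] with u hu
    exact hcov u s hu.1.le hs
  -- measurability of F
  have hFm : StronglyMeasurable F :=
    mYsw.stronglyMeasurable.integral_prod_right'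
  -- bound for second Fubini
  have hb : ∀ s : ℝ, 0 ≤ s → ∫ ω, ‖Y s ω * F ω‖ ∂P ≤ σ2 * t := by
    intro s hs
    have step1 : ∫ ω, ‖Y s ω * F ω‖ ∂P ≤ ∫ ω, ∫ u, ‖Y s ω * Y u ω‖ ∂μ ∂P := by
      refine integral_mono (hIntYF s hs).norm ((hprod s hs).norm.integral_prod_left)
        fun ω => ?_
      rw [Real.norm_eq_abs, abs_mul]
      calc |Y s ω| * |F ω| ≤ |Y s ω| * ∫ u, |Y u ω| ∂μ := by
            refine mul_le_mul_of_nonneg_left ?_ (abs_nonneg _)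
            simpa [Real.norm_eq_abs] using
              norm_integral_le_integral_norm (μ := μ) (fun u => Y u ω)
        _ = ∫ u, ‖Y s ω * Y u ω‖ ∂μ := by
            rw [← MeasureTheory.integral_const_mul]
            refine integral_congr_ae (.of_forall fun u => ?_)
            simp only [Real.norm_eq_abs, abs_mul]
    have step2 : ∫ ω, ∫ u, ‖Y s ω * Y u ω‖ ∂μ ∂P
        = ∫ u, ∫ ω, ‖Y s ω * Y u ω‖ ∂P ∂μ :=
      integral_integral_swap (hprod s hs).norm
    have step3 : ∫ u, ∫ ω, ‖Y s ω * Y u ω‖ ∂P ∂μ ≤ ∫ _u, σ2 ∂μ := by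
      refine integral_mono_ae ((hprod s hs).norm.integral_prod_right)
        (integrable_const σ2) ?_
      filter_upwards [ae_restrict_mem measurableSet_Ioc] with u hu
      exact L1b s u hs hu.1.le
    have step4 : ∫ _u, σ2 ∂μ = σ2 * t := by
      rw [MeasureTheory.integral_const, hμdef]
      simp [Real.volume_Ioc, ht, smul_eq_mul, mul_comm]
    linarith [step1, step2.le, step3, step2.ge]
  -- product integrability in (ω, s) of Y s ω * F ω
  have hgprod : Integrable (fun p : Ω × ℝ => Y p.2 p.1 * F p.1) (P.prod μ) := by
    have hgm : AEStronglyMeasurable (fun p : Ω × ℝ => Y p.2 p.1 * F p.1) (P.prod μ) :=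
      (mYsw.mul (hFm.measurable.comp measurable_fst)).aestronglyMeasurable
    refine (integrable_prod_iff' hgm).2 ⟨?_, ?_⟩
    · filter_upwards [ae_restrict_mem measurableSet_Ioc] with s hs
      exact hIntYF s hs.1.le
    · refine Integrable.mono' (integrable_const (σ2 * t)) ?_ ?_
      · have hsm : StronglyMeasurable fun p : Ω × ℝ => ‖Y p.2 p.1 * F p.1‖ :=
          (mYsw.mul (hFm.measurable.comp measurable_fst)).norm.stronglyMeasurable
        exact hsm.integral_prod_left'.aestronglyMeasurable
      · filter_upwards [ae_restrict_mem measurableSet_Ioc] with s hs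
        rw [Real.norm_of_nonneg (integral_nonneg fun ω => norm_nonneg _)]
        exact hb s hs.1.le
  have hIntF2 : Integrable (fun ω => F ω ^ 2) P := by
    refine (hgprod.integral_prod_left).congr (.of_forall fun ω => ?_)
    show ∫ s, Y s ω * F ω ∂μ = F ω ^ 2
    rw [MeasureTheory.integral_mul_const]
    simp [sq, hFdef]
  have hC : ∫ ω, F ω ^ 2 ∂P = ∫ s, ∫ u, σ2 * Real.exp (-lam * |s - u|) ∂μ ∂μ := by
    have h1 : ∫ ω, F ω ^ 2 ∂P = ∫ ω, ∫ s, Y s ω * F ω ∂μ ∂P := by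
      refine integral_congr_ae (.of_forall fun ω => ?_)
      show F ω ^ 2 = ∫ s, Y s ω * F ω ∂μ
      rw [MeasureTheory.integral_mul_const]
      simp [sq, hFdef]
    rw [h1, integral_integral_swap hgprod]
    refine integral_congr_ae ?_
    filter_upwards [ae_restrict_mem measurableSet_Ioc] with s hs
    exact G1 s hs.1.le
  -- evaluate the kernel integrals
  have hBval : ∫ ω, Y t ω * F ω ∂P = σ2 * ((1 - Real.exp (-lam * t)) / lam) := by
    rw [G1 t ht, hμdef, ← intervalIntegral.integral_of_le ht,
      intervalIntegral.integral_const_mul, kernInt hlam ht le_rfl]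
    rw [sub_self, mul_zero, Real.exp_zero]
    ring
  have hCval : ∫ ω, F ω ^ 2 ∂P
      = σ2 * (2 * t / lam - 2 * (1 - Real.exp (-lam * t)) / lam ^ 2) := by
    rw [hC]
    have h2 : ∀ s ∈ Set.Ioc (0:ℝ) t,
        (∫ u, σ2 * Real.exp (-lam * |s - u|) ∂μ)
          = σ2 * ((2 - Real.exp (-lam * s) - Real.exp (-lam * (t - s))) / lam) := by
      intro s hs
      rw [hμdef, ← intervalIntegral.integral_of_le ht,
        intervalIntegral.integral_const_mul, kernInt hlam hs.1.le hs.2]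
    rw [hμdef, setIntegral_congr_fun measurableSet_Ioc h2,
      ← intervalIntegral.integral_of_le ht, intervalIntegral.integral_const_mul,
      kernInt2 hlam ht]
  -- assemble
  have hexp : ∀ ω, (Y t ω + lam * ∫ s in (0:ℝ)..t, Y s ω) ^ 2
      = Y t ω ^ 2 + (2 * lam) * (Y t ω * F ω) + lam ^ 2 * F ω ^ 2 := by
    intro ω
    rw [intervalIntegral.integral_of_le ht]
    show (Y t ω + lam * ∫ s, Y s ω ∂μ) ^ 2 = _
    rw [hFdef]
    ring
  have iA : Integrable (fun ω => Y t ω ^ 2 + 2 * lam * (Y t ω * F ω)) P :=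
    (hsq t ht).add ((hIntYF t ht).const_mul (2 * lam))
  rw [integral_congr_ae (.of_forall hexp),
    integral_add iA (hIntF2.const_mul (lam ^ 2)),
    integral_add (hsq t ht) ((hIntYF t ht).const_mul (2 * lam)),
    MeasureTheory.integral_const_mul, MeasureTheory.integral_const_mul, L2 t ht, hBval, hCval]
  field_simp
  ring

end Aux

/-- Borderline case `C = λ`: if `E[Y_t Y_s] = σ² e^{−λ|t−s|}` and
`X_t = Y_t + λ ∫_0^t Y_s ds`, then `E[X_t²] = σ²(1 + 2λt)`, which tends to infinity
linearly in `t`. -/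
theorem stmt9 {Ω : Type*} [MeasurableSpace Ω] (P : Measure Ω) [IsProbabilityMeasure P]
    (σ2 lam : ℝ) (hσ : 0 < σ2) (hlam : 0 < lam)
    (Y : ℝ → Ω → ℝ) (hmeas : Measurable (Function.uncurry Y))
    (hpath : ∀ ω, Continuous fun t => Y t ω)
    (hsq : ∀ t : ℝ, 0 ≤ t → Integrable (fun ω => (Y t ω) ^ 2) P)
    (hcov : ∀ s t : ℝ, 0 ≤ s → 0 ≤ t →
      ∫ ω, Y t ω * Y s ω ∂P = σ2 * Real.exp (-lam * |t - s|))
    (X : ℝ → Ω → ℝ)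
    (hX : ∀ t ω, X t ω = Y t ω + lam * ∫ s in (0:ℝ)..t, Y s ω) :
    (∀ t : ℝ, 0 ≤ t → ∫ ω, (X t ω) ^ 2 ∂P = σ2 * (1 + 2 * lam * t)) ∧
    Filter.Tendsto (fun t => ∫ ω, (X t ω) ^ 2 ∂P) Filter.atTop Filter.atTop := by
  have key : ∀ t : ℝ, 0 ≤ t → ∫ ω, (X t ω) ^ 2 ∂P = σ2 * (1 + 2 * lam * t) := by
    intro t ht
    simp only [hX]
    exact mainEq P σ2 lam hσ hlam Y hmeas hpath hsq hcov ht
  refine ⟨key, ?_⟩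
  have h3 : Filter.Tendsto (fun x : ℝ => σ2 * (2 * lam) * x) Filter.atTop Filter.atTop :=
    Filter.Tendsto.const_mul_atTop (by positivity) Filter.tendsto_id
  have h2 : Filter.Tendsto (fun t : ℝ => σ2 * (1 + 2 * lam * t)) Filter.atTop Filter.atTop := by
    have h4 := Filter.tendsto_atTop_add_const_left Filter.atTop σ2 h3
    refine h4.congr fun x => by ring
  refine Filter.Tendsto.congr' ?_ h2
  filter_upwards [Filter.eventually_ge_atTop (0:ℝ)] with t ht
  exact (key t ht).symm
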